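/- arXiv:2211.06910 — 2 statements merged into one kernel-verified Lean document; each statement's English description precedes it below -/
import Mathlib

section
/- Araki–Lieb inequality: for a bipartite quantum state ρ_{AB} on a finite-dimensional Hilbert space, S(AB) ≥ |S(A) − S(B)|, where S denotes von Neumann entropy and S(A), S(B) are entropies of the reduced states. -/
open scoped Classical ComplexOrder

noncomputable section

/-- Partial trace over the second factor: the reduced state on system `A`. -/
def traceRight {A B : Type*} [Fintype A] [Fintype B]
    (ρ : Matrix (A × B) (A × B) ℂ) : Matrix A A ℂ :=
  fun a a' => ∑ b, ρ (a, b) (a', b)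

/-- Partial trace over the first factor: the reduced state on system `B`. -/
def traceLeft {A B : Type*} [Fintype A] [Fintype B]
    (ρ : Matrix (A × B) (A × B) ℂ) : Matrix B B ℂ :=
  fun b b' => ∑ a, ρ (a, b) (a, b')

/-- Von Neumann entropy `S(ρ) = −∑ λᵢ log λᵢ` in terms of the eigenvalues of a
Hermitian matrix (junk value `0` for non-Hermitian matrices). -/
def vnEntropy {ι : Type*} [Fintype ι] [DecidableEq ι] (ρ : Matrix ι ι ℂ) : ℝ :=
  if h : ρ.IsHermitian then -∑ i, h.eigenvalues i * Real.log (h.eigenvalues i) else 0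

end

open Polynomial Matrix


noncomputable section AL
namespace AL

variable {ι : Type*} [Fintype ι] [DecidableEq ι]

lemma eval_charpoly (M : Matrix ι ι ℂ) (r : ℂ) :
    M.charpoly.eval r = (r • (1 : Matrix ι ι ℂ) - M).det := by
  rw [Matrix.charpoly, Polynomial.eval, ← Polynomial.coe_eval₂RingHom, RingHom.map_det]
  congr 1
  ext i j
  by_cases h : i = j
  · subst h
    simp [Matrix.charmatrix_apply_eq, Matrix.smul_apply, Matrix.one_apply]
  · simp [Matrix.charmatrix_apply_ne _ _ _ h, Matrix.smul_apply, Matrix.one_apply_ne h,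
      Matrix.sub_apply, Matrix.one_apply, h]

lemma charpoly_hermitian {M : Matrix ι ι ℂ} (h : M.IsHermitian) :
    M.charpoly = ∏ i, (X - C ((h.eigenvalues i : ℝ) : ℂ)) := by
  apply Polynomial.funext
  intro r
  rw [eval_charpoly]
  have hU := (Matrix.mem_unitaryGroup_iff').mp (h.eigenvectorUnitary).2
  have hU' := (Matrix.mem_unitaryGroup_iff).mp (h.eigenvectorUnitary).2
  set U : Matrix ι ι ℂ := (h.eigenvectorUnitary : Matrix ι ι ℂ)
  have key : r • (1 : Matrix ι ι ℂ) - M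
      = U * (r • (1 : Matrix ι ι ℂ) - Matrix.diagonal (RCLike.ofReal ∘ h.eigenvalues)) * star U := by
    rw [Matrix.mul_sub, Matrix.sub_mul]
    congr 1
    · rw [Matrix.mul_smul, mul_one, Matrix.smul_mul, hU']
    · exact h.spectral_theorem
  rw [key, Matrix.det_mul, Matrix.det_mul, mul_comm, ← mul_assoc, ← Matrix.det_mul, hU,
    Matrix.det_one, one_mul]
  have : r • (1 : Matrix ι ι ℂ) - Matrix.diagonal (RCLike.ofReal ∘ h.eigenvalues)
      = Matrix.diagonal (fun i => r - (h.eigenvalues i : ℂ)) := by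
    ext i j
    rcases eq_or_ne i j with rfl | hij
    · simp
    · simp [Matrix.one_apply_ne hij, Matrix.diagonal_apply_ne _ hij]
  rw [this, Matrix.det_diagonal, Polynomial.eval_prod]
  simp

/-- the entropy summand as a function on `ℂ` -/
def g : ℂ → ℝ := fun z => z.re * Real.log z.re

lemma roots_charpoly_hermitian {M : Matrix ι ι ℂ} (h : M.IsHermitian) :
    M.charpoly.roots = Finset.univ.val.map (fun i => ((h.eigenvalues i : ℝ) : ℂ)) := by
  rw [charpoly_hermitian h, ← Polynomial.roots_multiset_prod_X_sub_C
    (Finset.univ.val.map (fun i => ((h.eigenvalues i : ℝ) : ℂ)))]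
  congr 1
  rw [Multiset.map_map, Finset.prod_eq_multiset_prod]
  rfl

lemma vnEntropy_eq_roots {M : Matrix ι ι ℂ} (h : M.IsHermitian) :
    vnEntropy M = -((M.charpoly.roots.map g).sum) := by
  rw [vnEntropy, dif_pos h, roots_charpoly_hermitian h, Multiset.map_map]
  congr 1

lemma vnEntropy_eq_of_charpoly_mul {κ : Type*} [Fintype κ] [DecidableEq κ]
    {M : Matrix ι ι ℂ} {N : Matrix κ κ ℂ} (hM : M.IsHermitian) (hN : N.IsHermitian)
    {m n : ℕ} (hch : X ^ m * M.charpoly = X ^ n * N.charpoly) :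
    vnEntropy M = vnEntropy N := by
  have hM0 : M.charpoly ≠ 0 := M.charpoly_monic.ne_zero
  have hN0 : N.charpoly ≠ 0 := N.charpoly_monic.ne_zero
  have hx : (X : ℂ[X]) ^ m ≠ 0 := pow_ne_zero _ X_ne_zero
  have hx' : (X : ℂ[X]) ^ n ≠ 0 := pow_ne_zero _ X_ne_zero
  have hroots : (m • ({0} : Multiset ℂ)) + M.charpoly.roots
      = (n • ({0} : Multiset ℂ)) + N.charpoly.roots := by
    have := congrArg Polynomial.roots hch
    rwa [Polynomial.roots_mul (mul_ne_zero hx hM0),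
      Polynomial.roots_mul (mul_ne_zero hx' hN0), Polynomial.roots_X_pow,
      Polynomial.roots_X_pow] at this
  have happ := congrArg (fun s : Multiset ℂ => (s.map g).sum) hroots
  simp only [Multiset.map_add, Multiset.sum_add, Multiset.nsmul_singleton,
    Multiset.map_replicate, Multiset.sum_replicate] at happ
  have hg0 : g 0 = 0 := by simp [g]
  rw [hg0] at happ
  simp only [smul_zero, zero_add] at happ
  rw [vnEntropy_eq_roots hM, vnEntropy_eq_roots hN, happ]

lemma vnEntropy_eq_of_charpoly {κ : Type*} [Fintype κ] [DecidableEq κ]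
    {M : Matrix ι ι ℂ} {N : Matrix κ κ ℂ} (hM : M.IsHermitian) (hN : N.IsHermitian)
    (hch : M.charpoly = N.charpoly) : vnEntropy M = vnEntropy N :=
  vnEntropy_eq_of_charpoly_mul hM hN (m := 0) (n := 0) (by simpa using hch)

lemma vnEntropy_diagonal (p : ι → ℝ) :
    vnEntropy (Matrix.diagonal (fun i => (p i : ℂ))) = -∑ i, p i * Real.log (p i) := by
  have hherm : (Matrix.diagonal (fun i => (p i : ℂ))).IsHermitian := by
    apply Matrix.isHermitian_diagonal_of_self_adjoint
    funext i
    simp [Complex.star_def]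
  have hch : (Matrix.diagonal (fun i => (p i : ℂ))).charpoly = ∏ i, (X - C ((p i : ℝ) : ℂ)) := by
    apply Polynomial.funext
    intro r
    rw [eval_charpoly]
    have : r • (1 : Matrix ι ι ℂ) - Matrix.diagonal (fun i => (p i : ℂ))
        = Matrix.diagonal (fun i => r - (p i : ℂ)) := by
      ext i j
      rcases eq_or_ne i j with rfl | hij
      · simp
      · simp [Matrix.one_apply_ne hij, Matrix.diagonal_apply_ne _ hij]
    rw [this, Matrix.det_diagonal, Polynomial.eval_prod]
    simp
  have hroots : (Matrix.diagonal (fun i => (p i : ℂ))).charpoly.roots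
      = Finset.univ.val.map (fun i => ((p i : ℝ) : ℂ)) := by
    rw [hch, ← Polynomial.roots_multiset_prod_X_sub_C
      (Finset.univ.val.map (fun i => ((p i : ℝ) : ℂ)))]
    congr 1
    rw [Multiset.map_map, Finset.prod_eq_multiset_prod]
    rfl
  rw [vnEntropy_eq_roots hherm, hroots, Multiset.map_map]
  congr 1


lemma klein {ι κ : Type*} [Fintype ι] [Fintype κ] (P : κ → ι → ℝ) (p : ι → ℝ) (r : κ → ℝ)
    (hP : ∀ l k, 0 ≤ P l k) (hp : ∀ k, 0 ≤ p k) (hr : ∀ l, 0 ≤ r l)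
    (hrow : ∀ k, ∑ l, P l k = 1) (hcol : ∀ l, ∑ k, P l k = 1)
    (hsum_p : ∑ k, p k = 1) (hsum_r : ∑ l, r l = 1)
    (hzero : ∀ l, r l = 0 → ∀ k, P l k * p k = 0) :
    ∑ l, (∑ k, P l k * p k) * Real.log (r l) ≤ ∑ k, p k * Real.log (p k) := by
  have key : ∀ l k, P l k * p k - P l k * r l
      ≤ P l k * (p k * Real.log (p k)) - P l k * (p k * Real.log (r l)) := by
    intro l k
    rcases eq_or_lt_of_le (hr l) with hrl | hrl
    · have h0 := hzero l hrl.symm k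
      rcases mul_eq_zero.mp h0 with h | h
      · simp [h, ← hrl]
      · simp [h, ← hrl, h0]
    rcases eq_or_lt_of_le (hp k) with hpk | hpk
    · simp [← hpk]
      nlinarith [hP l k, hrl]
    · have hlog : Real.log (r l) - Real.log (p k) ≤ r l / p k - 1 := by
        have := Real.log_le_sub_one_of_pos (x := r l / p k) (by positivity)
        rwa [Real.log_div (ne_of_gt hrl) (ne_of_gt hpk)] at this
      have h2 : p k * (Real.log (r l) - Real.log (p k)) ≤ r l - p k := by
        have := mul_le_mul_of_nonneg_left hlog (le_of_lt hpk)
        calc p k * (Real.log (r l) - Real.log (p k)) ≤ p k * (r l / p k - 1) := this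
          _ = r l - p k := by field_simp
      nlinarith [hP l k, h2]
  have hsum := Finset.sum_le_sum (fun l (_ : l ∈ Finset.univ) =>
    Finset.sum_le_sum (fun k (_ : k ∈ Finset.univ) => key l k))
  -- sum of LHS of key equals 0
  have hL : ∑ l, ∑ k, (P l k * p k - P l k * r l) = 0 := by
    simp only [Finset.sum_sub_distrib]
    have e1 : ∑ l : κ, ∑ k : ι, P l k * p k = 1 := by
      rw [Finset.sum_comm]
      calc ∑ k : ι, ∑ l : κ, P l k * p k = ∑ k : ι, (∑ l : κ, P l k) * p k := by
            simp [Finset.sum_mul]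
        _ = 1 := by simp only [hrow, one_mul]; exact hsum_p
    have e2 : ∑ l : κ, ∑ k : ι, P l k * r l = 1 := by
      calc ∑ l : κ, ∑ k : ι, P l k * r l = ∑ l : κ, (∑ k : ι, P l k) * r l := by
            simp [Finset.sum_mul]
        _ = 1 := by simp only [hcol, one_mul]; exact hsum_r
    rw [e1, e2, sub_self]
  have hR : ∑ l, ∑ k, (P l k * (p k * Real.log (p k)) - P l k * (p k * Real.log (r l)))
      = ∑ k, p k * Real.log (p k) - ∑ l, (∑ k, P l k * p k) * Real.log (r l) := by
    simp only [Finset.sum_sub_distrib]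
    congr 1
    · rw [Finset.sum_comm]
      calc ∑ k, ∑ l, P l k * (p k * Real.log (p k))
          = ∑ k, (∑ l, P l k) * (p k * Real.log (p k)) := by simp [Finset.sum_mul]
        _ = _ := by simp only [hrow, one_mul]
    · congr 1
      funext l
      rw [Finset.sum_mul]
      congr 1
      funext k
      ring
  rw [hL, hR] at hsum
  linarith

lemma logsum {A B : Type*} [Fintype A] [Fintype B] (q : A × B → ℝ) (a : A → ℝ) (b : B → ℝ)
    (hq : ∀ l, 0 ≤ q l) (hqa : ∀ i, ∑ j, q (i, j) = a i) (hqb : ∀ j, ∑ i, q (i, j) = b j) :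
    ∑ l : A × B, q l * Real.log (a l.1 * b l.2)
      = ∑ i, a i * Real.log (a i) + ∑ j, b j * Real.log (b j) := by
  have hqa0 : ∀ i j, a i = 0 → q (i, j) = 0 := by
    intro i j h
    have := (Finset.sum_eq_zero_iff_of_nonneg (fun j _ => hq (i, j))).mp ((hqa i).trans h)
    exact this j (Finset.mem_univ j)
  have hqb0 : ∀ i j, b j = 0 → q (i, j) = 0 := by
    intro i j h
    have := (Finset.sum_eq_zero_iff_of_nonneg (fun i _ => hq (i, j))).mp ((hqb j).trans h)
    exact this i (Finset.mem_univ i)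
  have step : ∀ l : A × B, q l * Real.log (a l.1 * b l.2)
      = q l * Real.log (a l.1) + q l * Real.log (b l.2) := by
    rintro ⟨i, j⟩
    by_cases ha : a i = 0
    · simp [hqa0 i j ha]
    by_cases hb : b j = 0
    · simp [hqb0 i j hb]
    rw [Real.log_mul ha hb]
    ring
  calc ∑ l : A × B, q l * Real.log (a l.1 * b l.2)
      = ∑ l : A × B, (q l * Real.log (a l.1) + q l * Real.log (b l.2)) :=
        Finset.sum_congr rfl (fun l _ => step l)
    _ = ∑ i, a i * Real.log (a i) + ∑ j, b j * Real.log (b j) := by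
        rw [Finset.sum_add_distrib]
        congr 1
        · rw [Fintype.sum_prod_type]
          congr 1
          funext i
          simp only []
          rw [← Finset.sum_mul, hqa]
        · rw [Fintype.sum_prod_type_right]
          congr 1
          funext j
          simp only []
          rw [← Finset.sum_mul, hqb]

variable {A B : Type*} [Fintype A] [Fintype B] [DecidableEq A] [DecidableEq B]

lemma traceRight_isHermitian {ρ : Matrix (A × B) (A × B) ℂ} (h : ρ.IsHermitian) :
    (traceRight ρ).IsHermitian := by
  ext a a'
  simp only [Matrix.conjTranspose_apply, traceRight, star_sum]
  refine Finset.sum_congr rfl fun b _ => ?_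
  have := congrFun (congrFun h.eq (a, b)) (a', b)
  simpa [Matrix.conjTranspose_apply] using this

lemma traceLeft_isHermitian {ρ : Matrix (A × B) (A × B) ℂ} (h : ρ.IsHermitian) :
    (traceLeft ρ).IsHermitian := by
  ext b b'
  simp only [Matrix.conjTranspose_apply, traceLeft, star_sum]
  refine Finset.sum_congr rfl fun a _ => ?_
  have := congrFun (congrFun h.eq (a, b)) (a, b')
  simpa [Matrix.conjTranspose_apply] using this

lemma sum_comm3 {α β γ M : Type*} [Fintype α] [Fintype β] [Fintype γ] [AddCommMonoid M]
    (f : α → β → γ → M) :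
    ∑ a, ∑ b, ∑ c, f a b c = ∑ c, ∑ a, ∑ b, f a b c := by
  have h1 : ∑ a, ∑ b, ∑ c, f a b c = ∑ a, ∑ c, ∑ b, f a b c :=
    Finset.sum_congr rfl fun a _ => Finset.sum_comm
  rw [h1, Finset.sum_comm]

lemma traceRight_posSemidef {ρ : Matrix (A × B) (A × B) ℂ} (h : ρ.PosSemidef) :
    (traceRight ρ).PosSemidef := by
  refine .of_dotProduct_mulVec_nonneg (traceRight_isHermitian h.1) fun x => ?_
  have lhs_eq : dotProduct (star x) ((traceRight ρ) *ᵥ x)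
      = ∑ b, ∑ a, ∑ a', star (x a) * ρ (a, b) (a', b) * x a' := by
    simp only [dotProduct, Matrix.mulVec, traceRight, Pi.star_apply, Finset.mul_sum,
      Finset.sum_mul]
    rw [sum_comm3]
    refine Finset.sum_congr rfl fun b _ => Finset.sum_congr rfl fun a _ =>
      Finset.sum_congr rfl fun a' _ => by ring
  have rhs_eq : ∀ b : B, dotProduct
        (star (fun ac : A × B => if ac.2 = b then x ac.1 else 0))
        (ρ *ᵥ (fun ac : A × B => if ac.2 = b then x ac.1 else 0))
      = ∑ a, ∑ a', star (x a) * ρ (a, b) (a', b) * x a' := by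
    intro b
    simp only [dotProduct, Matrix.mulVec, Pi.star_apply, Fintype.sum_prod_type,
      apply_ite (star : ℂ → ℂ), star_zero, ite_mul, zero_mul, mul_ite, mul_zero,
      Finset.sum_ite_eq', Finset.mem_univ, if_true]
    refine Finset.sum_congr rfl fun a _ => ?_
    rw [Finset.mul_sum]
    refine Finset.sum_congr rfl fun a' _ => by ring
  have key : dotProduct (star x) ((traceRight ρ) *ᵥ x)
      = ∑ b, dotProduct (star (fun ac : A × B => if ac.2 = b then x ac.1 else 0))
          (ρ *ᵥ (fun ac : A × B => if ac.2 = b then x ac.1 else 0)) := by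
    rw [lhs_eq]
    exact Finset.sum_congr rfl fun b _ => (rhs_eq b).symm
  rw [key]
  exact Finset.sum_nonneg fun b _ => h.dotProduct_mulVec_nonneg _

lemma traceLeft_eq_traceRight_swap (ρ : Matrix (A × B) (A × B) ℂ) :
    traceLeft ρ = traceRight (ρ.submatrix (Prod.swap : B × A → A × B) Prod.swap) := by
  ext b b'
  simp [traceLeft, traceRight, Matrix.submatrix_apply]

lemma traceLeft_posSemidef {ρ : Matrix (A × B) (A × B) ℂ} (h : ρ.PosSemidef) :
    (traceLeft ρ).PosSemidef := by
  rw [traceLeft_eq_traceRight_swap]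
  exact traceRight_posSemidef (h.submatrix _)

lemma trace_traceRight (ρ : Matrix (A × B) (A × B) ℂ) :
    (traceRight ρ).trace = ρ.trace := by
  simp [Matrix.trace, traceRight, Matrix.diag, Fintype.sum_prod_type]

lemma trace_traceLeft (ρ : Matrix (A × B) (A × B) ℂ) :
    (traceLeft ρ).trace = ρ.trace := by
  simp [Matrix.trace, traceLeft, Matrix.diag, Fintype.sum_prod_type]
  exact Finset.sum_comm

lemma posSemidef_diag_re_nonneg {ι : Type*} [Fintype ι] {M : Matrix ι ι ℂ}
    (h : M.PosSemidef) (i : ι) : 0 ≤ (M i i).re := by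
  have h2 := h.dotProduct_mulVec_nonneg (Pi.single i 1)
  have : dotProduct (star (Pi.single i 1 : ι → ℂ)) (M *ᵥ Pi.single i 1) = M i i := by
    simp [dotProduct, Matrix.mulVec, Pi.single_apply, apply_ite, Finset.sum_ite_eq',
      Finset.mul_sum, mul_ite]
  rw [this] at h2
  exact (Complex.le_def.mp h2).1

set_option maxHeartbeats 1000000 in
lemma trace_eq_sum_eigenvalues {ι : Type*} [Fintype ι] [DecidableEq ι]
    {M : Matrix ι ι ℂ} (h : M.IsHermitian) :
    M.trace = ∑ i, (h.eigenvalues i : ℂ) := by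
  have hUl : star (h.eigenvectorUnitary : Matrix ι ι ℂ) * (h.eigenvectorUnitary : Matrix ι ι ℂ)
      = 1 := Matrix.mem_unitaryGroup_iff'.mp h.eigenvectorUnitary.2
  conv_lhs => rw [h.spectral_theorem, Unitary.conjStarAlgAut_apply]
  rw [Matrix.trace_mul_cycle, hUl, Matrix.one_mul, Matrix.trace_diagonal]
  simp

set_option maxHeartbeats 1000000 in
lemma subadditivity {A B : Type*} [Fintype A] [Fintype B] [DecidableEq A] [DecidableEq B]
    (ρ : Matrix (A × B) (A × B) ℂ)
    (hpos : ρ.PosSemidef) (htr : ρ.trace = 1) :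
    vnEntropy ρ ≤ vnEntropy (traceRight ρ) + vnEntropy (traceLeft ρ) := by
  classical
  have hH : ρ.IsHermitian := hpos.1
  have hApos : (traceRight ρ).PosSemidef := traceRight_posSemidef hpos
  have hBpos : (traceLeft ρ).PosSemidef := traceLeft_posSemidef hpos
  have hHA : (traceRight ρ).IsHermitian := hApos.1
  have hHB : (traceLeft ρ).IsHermitian := hBpos.1
  set p : (A × B) → ℝ := hH.eigenvalues with hp_def
  set a : A → ℝ := hHA.eigenvalues with ha_def
  set b : B → ℝ := hHB.eigenvalues with hb_def
  set U : Matrix (A × B) (A × B) ℂ := (hH.eigenvectorUnitary : Matrix (A × B) (A × B) ℂ)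
    with hU_def
  set UA : Matrix A A ℂ := (hHA.eigenvectorUnitary : Matrix A A ℂ) with hUA_def
  set UB : Matrix B B ℂ := (hHB.eigenvectorUnitary : Matrix B B ℂ) with hUB_def
  have hUl : star U * U = 1 := Matrix.mem_unitaryGroup_iff'.mp hH.eigenvectorUnitary.2
  have hUr : U * star U = 1 := Matrix.mem_unitaryGroup_iff.mp hH.eigenvectorUnitary.2
  have hUAl : star UA * UA = 1 := Matrix.mem_unitaryGroup_iff'.mp hHA.eigenvectorUnitary.2
  have hUBl : star UB * UB = 1 := Matrix.mem_unitaryGroup_iff'.mp hHB.eigenvectorUnitary.2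
  have hUBr : UB * star UB = 1 := Matrix.mem_unitaryGroup_iff.mp hHB.eigenvectorUnitary.2
  set W : Matrix (A × B) (A × B) ℂ := fun x y => UA x.1 y.1 * UB x.2 y.2 with hW_def
  have hWl : star W * W = 1 := by
    ext x y
    rcases x with ⟨i, j⟩
    rcases y with ⟨i', j'⟩
    have h1 : (star W * W) (i, j) (i', j')
        = (∑ x, star (UA x i) * UA x i') * (∑ y, star (UB y j) * UB y j') := by
      rw [Matrix.mul_apply, Fintype.sum_prod_type, Finset.sum_mul_sum]
      refine Finset.sum_congr rfl fun x _ => Finset.sum_congr rfl fun y _ => ?_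
      rw [Matrix.star_apply]
      simp only [hW_def, star_mul']
      ring
    have h2 : ∑ x, star (UA x i) * UA x i' = (1 : Matrix A A ℂ) i i' := by
      rw [← hUAl, Matrix.mul_apply]
      exact Finset.sum_congr rfl fun x _ => by simp [Matrix.star_apply]
    have h3 : ∑ y, star (UB y j) * UB y j' = (1 : Matrix B B ℂ) j j' := by
      rw [← hUBl, Matrix.mul_apply]
      exact Finset.sum_congr rfl fun y _ => by simp [Matrix.star_apply]
    rw [h1, h2, h3]
    by_cases hii : i = i' <;> by_cases hjj : j = j' <;>
      simp [Matrix.one_apply, hii, hjj, Prod.ext_iff]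
  have hWr : W * star W = 1 := mul_eq_one_comm.mp hWl
  set V : Matrix (A × B) (A × B) ℂ := star W * U with hV_def
  have hVs : star V = star U * W := by rw [hV_def, Matrix.star_mul, star_star]
  have hVl : star V * V = 1 := by
    rw [hVs, hV_def, Matrix.mul_assoc, ← Matrix.mul_assoc W (star W) U, hWr, Matrix.one_mul, hUl]
  have hVr : V * star V = 1 := by
    rw [hVs, hV_def, Matrix.mul_assoc, ← Matrix.mul_assoc U (star U) W, hUr, Matrix.one_mul, hWl]
  set T : Matrix (A × B) (A × B) ℂ := star W * ρ * W with hT_def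
  have hTpos : T.PosSemidef := by
    have := hpos.conjTranspose_mul_mul_same W
    simpa [Matrix.star_eq_conjTranspose, hT_def] using this
  set q : A × B → ℝ := fun l => (T l l).re with hq_def
  have hq0 : ∀ l, 0 ≤ q l := fun l => posSemidef_diag_re_nonneg hTpos l
  have hspec : ρ = U * Matrix.diagonal (fun k => (p k : ℂ)) * star U := hH.spectral_theorem
  have hTV : T = V * Matrix.diagonal (fun k => (p k : ℂ)) * star V := by
    rw [hT_def, hVs, hV_def]
    conv_lhs => rw [hspec]
    simp only [Matrix.mul_assoc]
  set P : (A × B) → (A × B) → ℝ := fun l k => Complex.normSq (V l k) with hP_def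
  have hq_eq : ∀ l, q l = ∑ k, P l k * p k := by
    intro l
    have hTll : T l l = ∑ k, ((P l k * p k : ℝ) : ℂ) := by
      rw [hTV, Matrix.mul_apply]
      refine Finset.sum_congr rfl fun k _ => ?_
      rw [Matrix.mul_diagonal, Matrix.star_apply, Complex.star_def,
        mul_comm (V l k) ((p k : ℝ) : ℂ), mul_assoc, Complex.mul_conj]
      simp only [hP_def]
      push_cast
      ring
    rw [hq_def]
    simp only [hTll, ← Complex.ofReal_sum, Complex.ofReal_re]
  have hProw : ∀ k, ∑ l, P l k = 1 := by
    intro k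
    have h1 := congrFun (congrFun hVl k) k
    rw [Matrix.mul_apply, Matrix.one_apply_eq] at h1
    have h2 : ∑ l, ((P l k : ℝ) : ℂ) = 1 := by
      rw [← h1]
      refine (Finset.sum_congr rfl fun l _ => ?_).symm
      rw [Matrix.star_apply, Complex.star_def,
        mul_comm ((starRingEnd ℂ) (V l k)) (V l k), Complex.mul_conj]
    exact_mod_cast h2
  have hPcol : ∀ l, ∑ k, P l k = 1 := by
    intro l
    have h1 := congrFun (congrFun hVr l) l
    rw [Matrix.mul_apply, Matrix.one_apply_eq] at h1
    have h2 : ∑ k, ((P l k : ℝ) : ℂ) = 1 := by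
      rw [← h1]
      refine (Finset.sum_congr rfl fun k _ => ?_).symm
      rw [Matrix.star_apply, Complex.star_def, Complex.mul_conj]
    exact_mod_cast h2
  have hP0 : ∀ l k, 0 ≤ P l k := fun l k => Complex.normSq_nonneg _
  have hp0 : ∀ k, 0 ≤ p k := hpos.eigenvalues_nonneg
  have ha0 : ∀ i, 0 ≤ a i := hApos.eigenvalues_nonneg
  have hb0 : ∀ j, 0 ≤ b j := hBpos.eigenvalues_nonneg
  have hsum_p : ∑ k, p k = 1 := by
    have h1 := trace_eq_sum_eigenvalues hH
    rw [htr] at h1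
    exact_mod_cast h1.symm
  have hsum_a : ∑ i, a i = 1 := by
    have h1 := trace_eq_sum_eigenvalues hHA
    rw [trace_traceRight, htr] at h1
    exact_mod_cast h1.symm
  have hsum_b : ∑ j, b j = 1 := by
    have h1 := trace_eq_sum_eigenvalues hHB
    rw [trace_traceLeft, htr] at h1
    exact_mod_cast h1.symm
  -- the partial sums of q
  have hUBsum : ∀ x2 y2 : B, ∑ j, star (UB x2 j) * UB y2 j = if y2 = x2 then 1 else 0 := by
    intro x2 y2
    have h1 := congrFun (congrFun hUBr y2) x2
    rw [Matrix.mul_apply] at h1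
    calc ∑ j, star (UB x2 j) * UB y2 j = ∑ j, UB y2 j * star (UB x2 j) :=
          Finset.sum_congr rfl fun j _ => mul_comm _ _
      _ = (1 : Matrix B B ℂ) y2 x2 := by
          rw [← h1]
          exact Finset.sum_congr rfl fun j _ => by rw [Matrix.star_apply]
      _ = if y2 = x2 then 1 else 0 := Matrix.one_apply
  have hdiagA : star UA * (traceRight ρ) * UA = Matrix.diagonal (fun i => (a i : ℂ)) :=
    by have h := (StarAlgEquiv.symm_apply_eq (Unitary.conjStarAlgAut ℂ (Matrix A A ℂ)
      hHA.eigenvectorUnitary)).mpr hHA.spectral_theorem; exact h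
  have key : ∀ i : A, ∑ j, T (i, j) (i, j)
      = ∑ x1, ∑ y1, star (UA x1 i) * (traceRight ρ) x1 y1 * UA y1 i := by
    intro i
    have e1 : ∀ j, T (i, j) (i, j)
        = ∑ y, ∑ x, star (W x (i, j)) * ρ x y * W y (i, j) := by
      intro j
      rw [hT_def, Matrix.mul_apply]
      refine Finset.sum_congr rfl fun y _ => ?_
      rw [Matrix.mul_apply, Finset.sum_mul]
      refine Finset.sum_congr rfl fun x _ => ?_
      rw [Matrix.star_apply]
    calc ∑ j, T (i, j) (i, j)
        = ∑ j, ∑ y, ∑ x, star (W x (i, j)) * ρ x y * W y (i, j) :=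
          Finset.sum_congr rfl fun j _ => e1 j
      _ = ∑ x, ∑ j, ∑ y, star (W x (i, j)) * ρ x y * W y (i, j) := sum_comm3 _
      _ = ∑ x, ∑ y, ∑ j, star (W x (i, j)) * ρ x y * W y (i, j) :=
          Finset.sum_congr rfl fun x _ => Finset.sum_comm
      _ = ∑ x : A × B, ∑ y : A × B,
            star (UA x.1 i) * ρ x y * UA y.1 i * (if y.2 = x.2 then 1 else 0) := by
          refine Finset.sum_congr rfl fun x _ => Finset.sum_congr rfl fun y _ => ?_
          rw [← hUBsum x.2 y.2, Finset.mul_sum]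
          refine Finset.sum_congr rfl fun j _ => ?_
          simp only [hW_def, star_mul']
          ring
      _ = ∑ x1, ∑ x2, ∑ y1, star (UA x1 i) * ρ (x1, x2) (y1, x2) * UA y1 i := by
          rw [Fintype.sum_prod_type]
          refine Finset.sum_congr rfl fun x1 _ => Finset.sum_congr rfl fun x2 _ => ?_
          rw [Fintype.sum_prod_type]
          refine Finset.sum_congr rfl fun y1 _ => ?_
          simp [mul_ite, Finset.sum_ite_eq', Finset.mem_univ]
      _ = ∑ x1, ∑ y1, ∑ x2, star (UA x1 i) * ρ (x1, x2) (y1, x2) * UA y1 i :=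
          Finset.sum_congr rfl fun x1 _ => Finset.sum_comm
      _ = ∑ x1, ∑ y1, star (UA x1 i) * (traceRight ρ) x1 y1 * UA y1 i := by
          refine Finset.sum_congr rfl fun x1 _ => Finset.sum_congr rfl fun y1 _ => ?_
          simp only [traceRight, Finset.mul_sum, Finset.sum_mul]
  have key2 : ∀ i, (∑ x1, ∑ y1, star (UA x1 i) * (traceRight ρ) x1 y1 * UA y1 i)
      = ((a i : ℝ) : ℂ) := by
    intro i
    have h2 : (star UA * (traceRight ρ) * UA) i i = ((a i : ℝ) : ℂ) := by
      rw [hdiagA, Matrix.diagonal_apply_eq]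
    rw [← h2, Matrix.mul_apply, Finset.sum_comm]
    refine Finset.sum_congr rfl fun y1 _ => ?_
    rw [Matrix.mul_apply, Finset.sum_mul]
    refine Finset.sum_congr rfl fun x1 _ => ?_
    rw [Matrix.star_apply]
  have hqa : ∀ i, ∑ j, q (i, j) = a i := by
    intro i
    have h3 : ∑ j, q (i, j) = (∑ j, T (i, j) (i, j)).re := by
      rw [Complex.re_sum]
    rw [h3, key i, key2 i, Complex.ofReal_re]
  have hUAr : UA * star UA = 1 := Matrix.mem_unitaryGroup_iff.mp hHA.eigenvectorUnitary.2
  have hUAsum : ∀ x1 y1 : A, ∑ i, star (UA x1 i) * UA y1 i = if y1 = x1 then 1 else 0 := by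
    intro x1 y1
    have h1 := congrFun (congrFun hUAr y1) x1
    rw [Matrix.mul_apply] at h1
    calc ∑ i, star (UA x1 i) * UA y1 i = ∑ i, UA y1 i * star (UA x1 i) :=
          Finset.sum_congr rfl fun i _ => mul_comm _ _
      _ = (1 : Matrix A A ℂ) y1 x1 := by
          rw [← h1]
          exact Finset.sum_congr rfl fun i _ => by rw [Matrix.star_apply]
      _ = if y1 = x1 then 1 else 0 := Matrix.one_apply
  have hdiagB : star UB * (traceLeft ρ) * UB = Matrix.diagonal (fun j => (b j : ℂ)) :=
    by have h := (StarAlgEquiv.symm_apply_eq (Unitary.conjStarAlgAut ℂ (Matrix B B ℂ)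
      hHB.eigenvectorUnitary)).mpr hHB.spectral_theorem; exact h
  have keyB : ∀ j : B, ∑ i, T (i, j) (i, j)
      = ∑ x2, ∑ y2, star (UB x2 j) * (traceLeft ρ) x2 y2 * UB y2 j := by
    intro j
    have e1 : ∀ i, T (i, j) (i, j)
        = ∑ y, ∑ x, star (W x (i, j)) * ρ x y * W y (i, j) := by
      intro i
      rw [hT_def, Matrix.mul_apply]
      refine Finset.sum_congr rfl fun y _ => ?_
      rw [Matrix.mul_apply, Finset.sum_mul]
      refine Finset.sum_congr rfl fun x _ => ?_
      rw [Matrix.star_apply]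
    calc ∑ i, T (i, j) (i, j)
        = ∑ i, ∑ y, ∑ x, star (W x (i, j)) * ρ x y * W y (i, j) :=
          Finset.sum_congr rfl fun i _ => e1 i
      _ = ∑ x, ∑ i, ∑ y, star (W x (i, j)) * ρ x y * W y (i, j) := sum_comm3 _
      _ = ∑ x, ∑ y, ∑ i, star (W x (i, j)) * ρ x y * W y (i, j) :=
          Finset.sum_congr rfl fun x _ => Finset.sum_comm
      _ = ∑ x : A × B, ∑ y : A × B,
            star (UB x.2 j) * ρ x y * UB y.2 j * (if y.1 = x.1 then 1 else 0) := by
          refine Finset.sum_congr rfl fun x _ => Finset.sum_congr rfl fun y _ => ?_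
          rw [← hUAsum x.1 y.1, Finset.mul_sum]
          refine Finset.sum_congr rfl fun i _ => ?_
          simp only [hW_def, star_mul']
          ring
      _ = ∑ x1, ∑ x2, ∑ y2, star (UB x2 j) * ρ (x1, x2) (x1, y2) * UB y2 j := by
          rw [Fintype.sum_prod_type]
          refine Finset.sum_congr rfl fun x1 _ => Finset.sum_congr rfl fun x2 _ => ?_
          rw [Fintype.sum_prod_type, Finset.sum_comm]
          refine Finset.sum_congr rfl fun y2 _ => ?_
          simp [mul_ite, Finset.sum_ite_eq', Finset.mem_univ]
      _ = ∑ x2, ∑ x1, ∑ y2, star (UB x2 j) * ρ (x1, x2) (x1, y2) * UB y2 j :=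
          Finset.sum_comm
      _ = ∑ x2, ∑ y2, ∑ x1, star (UB x2 j) * ρ (x1, x2) (x1, y2) * UB y2 j :=
          Finset.sum_congr rfl fun x2 _ => Finset.sum_comm
      _ = ∑ x2, ∑ y2, star (UB x2 j) * (traceLeft ρ) x2 y2 * UB y2 j := by
          refine Finset.sum_congr rfl fun x2 _ => Finset.sum_congr rfl fun y2 _ => ?_
          simp only [traceLeft, Finset.mul_sum, Finset.sum_mul]
  have keyB2 : ∀ j, (∑ x2, ∑ y2, star (UB x2 j) * (traceLeft ρ) x2 y2 * UB y2 j)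
      = ((b j : ℝ) : ℂ) := by
    intro j
    have h2 : (star UB * (traceLeft ρ) * UB) j j = ((b j : ℝ) : ℂ) := by
      rw [hdiagB, Matrix.diagonal_apply_eq]
    rw [← h2, Matrix.mul_apply, Finset.sum_comm]
    refine Finset.sum_congr rfl fun y2 _ => ?_
    rw [Matrix.mul_apply, Finset.sum_mul]
    refine Finset.sum_congr rfl fun x2 _ => ?_
    rw [Matrix.star_apply]
  have hqb : ∀ j, ∑ i, q (i, j) = b j := by
    intro j
    have h3 : ∑ i, q (i, j) = (∑ i, T (i, j) (i, j)).re := by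
      rw [Complex.re_sum]
    rw [h3, keyB j, keyB2 j, Complex.ofReal_re]
  have hqa' : ∀ i, ∑ j, q (i, j) = a i := by
    intro i
    have h3 : ∑ j, q (i, j) = (∑ j, T (i, j) (i, j)).re := by
      rw [Complex.re_sum]
    rw [h3, key i, key2 i, Complex.ofReal_re]
  set r : A × B → ℝ := fun l => a l.1 * b l.2 with hr_def
  have hr0 : ∀ l, 0 ≤ r l := fun l => mul_nonneg (ha0 _) (hb0 _)
  have hsum_r : ∑ l, r l = 1 := by
    have : ∑ l : A × B, a l.1 * b l.2 = (∑ i, a i) * (∑ j, b j) := by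
      rw [Fintype.sum_prod_type, Finset.sum_mul_sum]
    rw [hr_def, this, hsum_a, hsum_b, one_mul]
  have hzero : ∀ l, r l = 0 → ∀ k, P l k * p k = 0 := by
    intro l hl k
    have hql : q l = 0 := by
      rcases mul_eq_zero.mp hl with h | h
      · have hsum : ∑ j, q (l.1, j) = 0 := (hqa' l.1).trans h
        have hz := (Finset.sum_eq_zero_iff_of_nonneg (fun j _ => hq0 _)).mp hsum l.2
          (Finset.mem_univ l.2)
        simpa using hz
      · have hsum : ∑ i, q (i, l.2) = 0 := (hqb l.2).trans h
        have hz := (Finset.sum_eq_zero_iff_of_nonneg (fun i _ => hq0 _)).mp hsum l.1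
          (Finset.mem_univ l.1)
        simpa using hz
    have hsumP : ∑ k, P l k * p k = 0 := by rw [← hq_eq l, hql]
    exact (Finset.sum_eq_zero_iff_of_nonneg
      (fun k _ => mul_nonneg (hP0 l k) (hp0 k))).mp hsumP k (Finset.mem_univ k)
  have hklein := klein P p r hP0 hp0 hr0 hProw hPcol hsum_p hsum_r hzero
  have hlog := logsum q a b hq0 hqa' hqb
  have hq_line : ∑ l, (∑ k, P l k * p k) * Real.log (r l)
      = ∑ i, a i * Real.log (a i) + ∑ j, b j * Real.log (b j) := by
    rw [← hlog]
    exact Finset.sum_congr rfl fun l _ => by rw [← hq_eq l]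
  rw [hq_line] at hklein
  have eS : vnEntropy ρ = -∑ k, p k * Real.log (p k) := by
    simp only [vnEntropy]
    rw [dif_pos hH]
  have eA : vnEntropy (traceRight ρ) = -∑ i, a i * Real.log (a i) := by
    simp only [vnEntropy]
    rw [dif_pos hHA]
  have eB : vnEntropy (traceLeft ρ) = -∑ j, b j * Real.log (b j) := by
    simp only [vnEntropy]
    rw [dif_pos hHB]
  rw [eS, eA, eB]
  linarith

def outer {X : Type*} (ψ : X → ℂ) : Matrix X X ℂ := fun u v => ψ u * star (ψ v)

lemma outer_posSemidef {X : Type*} [Fintype X] (ψ : X → ℂ) : (outer ψ).PosSemidef := by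
  refine .of_dotProduct_mulVec_nonneg ?_ ?_
  · ext u v
    simp only [Matrix.conjTranspose_apply, outer, star_mul', star_star]
    ring
  · intro x
    have hrw : dotProduct (star x) ((outer ψ) *ᵥ x)
        = star (∑ v, star (ψ v) * x v) * (∑ v, star (ψ v) * x v) := by
      rw [star_sum]
      rw [Finset.sum_mul_sum]
      simp only [dotProduct, Matrix.mulVec, outer, Pi.star_apply, Finset.mul_sum]
      refine Finset.sum_congr rfl fun u _ => Finset.sum_congr rfl fun v _ => ?_
      simp only [star_mul', star_star]
      ring
    rw [hrw]
    exact star_mul_self_nonneg _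

lemma charpoly_mul_comm_rect {X Y : Type*} [Fintype X] [Fintype Y] [DecidableEq X]
    [DecidableEq Y] (M : Matrix X Y ℂ) (N : Matrix Y X ℂ) :
    Polynomial.X ^ (Fintype.card Y) * (M * N).charpoly
      = Polynomial.X ^ (Fintype.card X) * (N * M).charpoly := by
  apply Polynomial.eq_of_infinite_eval_eq
  have hinf : ({(0 : ℂ)}ᶜ : Set ℂ).Infinite := (Set.finite_singleton 0).infinite_compl
  refine hinf.mono ?_
  intro x hx
  have hx0 : x ≠ 0 := by simpa using hx
  simp only [Set.mem_setOf_eq, Polynomial.eval_mul, Polynomial.eval_pow, Polynomial.eval_X,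
    eval_charpoly]
  have h1 : x • (1 : Matrix X X ℂ) - M * N
      = x • ((1 : Matrix X X ℂ) + ((-x⁻¹) • M) * N) := by
    rw [Matrix.smul_mul, smul_add, smul_smul]
    rw [mul_neg, mul_inv_cancel₀ hx0]
    simp [sub_eq_add_neg]
  have h2 : x • (1 : Matrix Y Y ℂ) - N * M
      = x • ((1 : Matrix Y Y ℂ) + N * ((-x⁻¹) • M)) := by
    rw [Matrix.mul_smul, smul_add, smul_smul]
    rw [mul_neg, mul_inv_cancel₀ hx0]
    simp [sub_eq_add_neg]
  rw [h1, h2, Matrix.det_smul, Matrix.det_smul, Matrix.det_one_add_mul_comm]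
  ring

lemma vnEntropy_traceRight_outer {X Y : Type*} [Fintype X] [Fintype Y] [DecidableEq X]
    [DecidableEq Y] (ψ : X × Y → ℂ) :
    vnEntropy (traceRight (outer ψ)) = vnEntropy (traceLeft (outer ψ)) := by
  classical
  set M : Matrix X Y ℂ := fun x y => ψ (x, y) with hM_def
  have hR : traceRight (outer ψ) = M * Mᴴ := by
    ext x x'
    rw [Matrix.mul_apply]
    simp only [Matrix.conjTranspose_apply]
    simp only [traceRight, outer, Matrix.conjTranspose_apply, hM_def]
  have hL : traceLeft (outer ψ) = (Mᴴ * M)ᵀ := by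
    ext y y'
    simp only [traceLeft, outer, Matrix.transpose_apply, Matrix.mul_apply,
      Matrix.conjTranspose_apply, hM_def]
    exact Finset.sum_congr rfl fun x _ => mul_comm _ _
  have hH1 : (M * Mᴴ).IsHermitian := (Matrix.posSemidef_self_mul_conjTranspose M).1
  have hH2 : (Mᴴ * M).IsHermitian := (Matrix.posSemidef_conjTranspose_mul_self M).1
  have hH3 : ((Mᴴ * M)ᵀ).IsHermitian := hH2.transpose
  have step1 : vnEntropy (M * Mᴴ) = vnEntropy (Mᴴ * M) :=
    vnEntropy_eq_of_charpoly_mul hH1 hH2 (charpoly_mul_comm_rect M Mᴴ)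
  have hcht : ((Mᴴ * M)ᵀ).charpoly = (Mᴴ * M).charpoly := by
    apply Polynomial.funext
    intro r
    rw [eval_charpoly, eval_charpoly]
    have : r • (1 : Matrix Y Y ℂ) - (Mᴴ * M)ᵀ = (r • (1 : Matrix Y Y ℂ) - (Mᴴ * M))ᵀ := by
      rw [Matrix.transpose_sub, Matrix.transpose_smul, Matrix.transpose_one]
    rw [this, Matrix.det_transpose]
  have step2 : vnEntropy (Mᴴ * M) = vnEntropy ((Mᴴ * M)ᵀ) :=
    vnEntropy_eq_of_charpoly (hH2) (hH3) hcht.symm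
  rw [hR, hL, step1, step2]

lemma traceRight_eq_traceLeft_swap {A B : Type*} [Fintype A] [Fintype B]
    (ρ : Matrix (A × B) (A × B) ℂ) :
    traceRight ρ = traceLeft (ρ.submatrix (Prod.swap : B × A → A × B) Prod.swap) := by
  ext a a'
  simp [traceRight, traceLeft, Matrix.submatrix_apply]

lemma araki_lieb_one_sided {A B : Type*} [Fintype A] [Fintype B] [DecidableEq A] [DecidableEq B]
    (ρ : Matrix (A × B) (A × B) ℂ) (hpos : ρ.PosSemidef) (htr : ρ.trace = 1) :
    vnEntropy (traceRight ρ) ≤ vnEntropy (traceLeft ρ) + vnEntropy ρ := by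
  classical
  have hH : ρ.IsHermitian := hpos.1
  set p : (A × B) → ℝ := hH.eigenvalues with hp_def
  set U : Matrix (A × B) (A × B) ℂ := (hH.eigenvectorUnitary : Matrix (A × B) (A × B) ℂ)
    with hU_def
  have hUl : star U * U = 1 := Matrix.mem_unitaryGroup_iff'.mp hH.eigenvectorUnitary.2
  have hp0 : ∀ k, 0 ≤ p k := hpos.eigenvalues_nonneg
  set ψ : (A × B) × (A × B) → ℂ :=
    fun kc => ((Real.sqrt (p kc.2) : ℝ) : ℂ) * U kc.1 kc.2 with hψ_def
  have hspec : ρ = U * Matrix.diagonal (fun k => (p k : ℂ)) * star U := hH.spectral_theorem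
  have hTR : traceRight (outer ψ) = ρ := by
    ext k k'
    have hrhs : ρ k k' = ∑ c, U k c * (p c : ℂ) * star (U k' c) := by
      conv_lhs => rw [hspec]
      rw [Matrix.mul_apply]
      refine Finset.sum_congr rfl fun c _ => ?_
      rw [Matrix.mul_diagonal, Matrix.star_apply]
    rw [hrhs]
    simp only [traceRight, outer, hψ_def]
    refine Finset.sum_congr rfl fun c _ => ?_
    simp only [star_mul', star_star, Complex.star_def, Complex.conj_ofReal]
    have : ((Real.sqrt (p c) : ℝ) : ℂ) * ((Real.sqrt (p c) : ℝ) : ℂ) = ((p c : ℝ) : ℂ) := by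
      rw [← Complex.ofReal_mul, Real.mul_self_sqrt (hp0 c)]
    rw [← this]
    ring
  have hTL : traceLeft (outer ψ) = Matrix.diagonal (fun c => ((p c : ℝ) : ℂ)) := by
    ext c c'
    have h2 : ∑ k, star (U k c') * U k c = (1 : Matrix (A × B) (A × B) ℂ) c' c := by
      rw [← hUl, Matrix.mul_apply]
      exact Finset.sum_congr rfl fun k _ => by rw [Matrix.star_apply]
    have h1 : traceLeft (outer ψ) c c'
        = (((Real.sqrt (p c) : ℝ) : ℂ) * ((Real.sqrt (p c') : ℝ) : ℂ))
          * ∑ k, star (U k c') * U k c := by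
      simp only [traceLeft, outer, hψ_def, Finset.mul_sum]
      refine Finset.sum_congr rfl fun k _ => ?_
      simp only [star_mul', star_star, Complex.star_def, Complex.conj_ofReal]
      ring
    rw [h1, h2]
    rcases eq_or_ne c c' with rfl | hne
    · rw [Matrix.one_apply_eq, Matrix.diagonal_apply_eq, mul_one, ← Complex.ofReal_mul,
        Real.mul_self_sqrt (hp0 c)]
    · rw [Matrix.one_apply_ne (Ne.symm hne), Matrix.diagonal_apply_ne _ hne, mul_zero]
  -- regrouped pure state
  set φ : A × (B × (A × B)) → ℂ := fun x => ψ ((x.1, x.2.1), x.2.2) with hφ_def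
  set τ : Matrix (B × (A × B)) (B × (A × B)) ℂ := traceLeft (outer φ) with hτ_def
  have hST : ∀ (k k' : A × B), traceRight (outer ψ) k k' = ∑ c, ψ (k, c) * star (ψ (k', c)) :=
    fun k k' => rfl
  have hTR' : traceRight (outer φ) = traceRight ρ := by
    ext a1 a2
    calc traceRight (outer φ) a1 a2
        = ∑ bc : B × (A × B), φ (a1, bc) * star (φ (a2, bc)) := rfl
      _ = ∑ b, ∑ c, ψ ((a1, b), c) * star (ψ ((a2, b), c)) := by
          rw [Fintype.sum_prod_type]
      _ = ∑ b, (traceRight (outer ψ)) (a1, b) (a2, b) := rfl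
      _ = ∑ b, ρ (a1, b) (a2, b) := by rw [hTR]
      _ = traceRight ρ a1 a2 := rfl
  have hτpos : τ.PosSemidef := traceLeft_posSemidef (outer_posSemidef φ)
  have hτtr : τ.trace = 1 := by
    rw [hτ_def, trace_traceLeft]
    have htrφ : (outer φ).trace = (outer ψ).trace := by
      simp only [Matrix.trace, Matrix.diag, outer, Fintype.sum_prod_type, hφ_def]
    rw [htrφ, ← trace_traceLeft (outer ψ), hTL, Matrix.trace_diagonal]
    have h1 := trace_eq_sum_eigenvalues hH
    rw [htr] at h1
    exact h1.symm
  have hτR : traceRight τ = traceLeft ρ := by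
    ext b1 b2
    calc traceRight τ b1 b2 = ∑ c, ∑ a, φ (a, (b1, c)) * star (φ (a, (b2, c))) := rfl
      _ = ∑ a, ∑ c, ψ ((a, b1), c) * star (ψ ((a, b2), c)) := Finset.sum_comm
      _ = ∑ a, (traceRight (outer ψ)) (a, b1) (a, b2) := rfl
      _ = ∑ a, ρ (a, b1) (a, b2) := by rw [hTR]
      _ = traceLeft ρ b1 b2 := rfl
  have hτL : traceLeft τ = Matrix.diagonal (fun c => ((p c : ℝ) : ℂ)) := by
    ext c1 c2
    calc traceLeft τ c1 c2 = ∑ b, ∑ a, φ (a, (b, c1)) * star (φ (a, (b, c2))) := rfl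
      _ = ∑ a, ∑ b, ψ ((a, b), c1) * star (ψ ((a, b), c2)) := Finset.sum_comm
      _ = ∑ k : A × B, ψ (k, c1) * star (ψ (k, c2)) := by rw [Fintype.sum_prod_type]
      _ = traceLeft (outer ψ) c1 c2 := rfl
      _ = Matrix.diagonal (fun c => ((p c : ℝ) : ℂ)) c1 c2 := by rw [hTL]
  have hSchmidt := vnEntropy_traceRight_outer φ
  have hsub := subadditivity τ hτpos hτtr
  have e1 : vnEntropy (traceRight (outer φ)) = vnEntropy (traceRight ρ) := by rw [hTR']
  have e3 : vnEntropy (traceRight τ) = vnEntropy (traceLeft ρ) := by rw [hτR]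
  have e4 : vnEntropy (traceLeft τ) = vnEntropy ρ := by
    rw [hτL, vnEntropy_diagonal]
    have : vnEntropy ρ = -∑ k, p k * Real.log (p k) := by
      simp only [vnEntropy]
      rw [dif_pos hH]
    rw [this]
  rw [hτ_def] at hsub
  rw [e1] at hSchmidt
  rw [← hτ_def] at hSchmidt
  rw [← hτ_def, e3, e4] at hsub
  linarith [hSchmidt, hsub]

end AL
end AL

/-- Araki–Lieb inequality `S(AB) ≥ |S(A) − S(B)|`. -/
theorem araki_lieb {A B : Type*}
    [Fintype A] [Fintype B] [DecidableEq A] [DecidableEq B]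
    (ρ : Matrix (A × B) (A × B) ℂ)
    (hpos : ρ.PosSemidef) (htr : ρ.trace = 1) :
    |vnEntropy (traceRight ρ) - vnEntropy (traceLeft ρ)| ≤ vnEntropy ρ := by
  classical
  rw [abs_sub_le_iff]
  constructor
  · have h1 := AL.araki_lieb_one_sided ρ hpos htr
    linarith
  · set ρs : Matrix (B × A) (B × A) ℂ :=
      ρ.submatrix (Prod.swap : B × A → A × B) Prod.swap with hρs_def
    have hspos : ρs.PosSemidef := hpos.submatrix _
    have hstr : ρs.trace = 1 := by
      rw [hρs_def, ← htr]
      simp only [Matrix.trace, Matrix.diag, Matrix.submatrix_apply]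
      exact Fintype.sum_equiv (Equiv.prodComm B A) _ _ (fun x => rfl)
    have h2 := AL.araki_lieb_one_sided ρs hspos hstr
    have hR : traceRight ρs = traceLeft ρ := (AL.traceLeft_eq_traceRight_swap ρ).symm
    have hL : traceLeft ρs = traceRight ρ := (AL.traceRight_eq_traceLeft_swap ρ).symm
    have hE : vnEntropy ρs = vnEntropy ρ := by
      have hre : ρs = Matrix.reindex (Equiv.prodComm A B) (Equiv.prodComm A B) ρ := by
        ext x y
        simp [hρs_def, Matrix.reindex_apply, Matrix.submatrix_apply]
      refine AL.vnEntropy_eq_of_charpoly hspos.1 hpos.1 ?_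
      rw [hre, Matrix.charpoly_reindex]
    rw [hR, hL, hE] at h2
    linarith
end

section
/- Subadditivity of von Neumann entropy: for a bipartite quantum state ρ_{AB} on a finite-dimensional Hilbert space, S(AB) ≤ S(A) + S(B), with equality if and only if ρ_{AB} = ρ_A ⊗ ρ_B. -/
open scoped Classical ComplexOrder

section helpers
open Matrix Kronecker Complex
set_option linter.unusedSectionVars false
set_option maxHeartbeats 1000000

variable {A B : Type*} [Fintype A] [Fintype B] [DecidableEq A] [DecidableEq B]

/-- embed a vector on `A` into `A × B` supported on column `b`. -/
noncomputable def embB (x : A → ℂ) (b : B) : A × B → ℂ := fun m => if m.2 = b then x m.1 else 0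
/-- embed a vector on `B` into `A × B` supported on row `a`. -/
noncomputable def embA (x : B → ℂ) (a : A) : A × B → ℂ := fun m => if m.1 = a then x m.2 else 0

lemma dot_traceRight (M : Matrix (A × B) (A × B) ℂ) (x : A → ℂ) :
    star x ⬝ᵥ traceRight M *ᵥ x = ∑ b, star (embB x b) ⬝ᵥ M *ᵥ (embB x b) := by
  simp only [dotProduct, mulVec, traceRight, embB, Pi.star_apply, apply_ite (star : ℂ → ℂ),
    Fintype.sum_prod_type, star_zero, ite_mul, zero_mul, mul_ite, mul_zero]
  simp only [Finset.sum_ite_eq', Finset.mem_univ, if_true, Finset.mul_sum, Finset.sum_mul]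
  rw [show (∑ a1 : A, ∑ a2 : A, ∑ b : B, star (x a1) * (M (a1, b) (a2, b) * x a2))
      = ∑ a1 : A, ∑ b : B, ∑ a2 : A, star (x a1) * (M (a1, b) (a2, b) * x a2) from
    Finset.sum_congr rfl fun _ _ => Finset.sum_comm]
  exact Finset.sum_comm

lemma dot_traceLeft (M : Matrix (A × B) (A × B) ℂ) (x : B → ℂ) :
    star x ⬝ᵥ traceLeft M *ᵥ x = ∑ a, star (embA x a) ⬝ᵥ M *ᵥ (embA x a) := by
  simp only [dotProduct, mulVec, traceLeft, embA, Pi.star_apply, apply_ite (star : ℂ → ℂ),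
    Fintype.sum_prod_type, star_zero, ite_mul, zero_mul, mul_ite, mul_zero]
  simp only [Finset.sum_ite_irrel, Finset.sum_const_zero, mul_ite, mul_zero,
    Finset.sum_ite_eq', Finset.sum_ite_eq, Finset.mem_univ, if_true, Finset.mul_sum,
    Finset.sum_mul]
  rw [show (∑ b1 : B, ∑ b2 : B, ∑ a : A, star (x b1) * (M (a, b1) (a, b2) * x b2))
      = ∑ b1 : B, ∑ a : A, ∑ b2 : B, star (x b1) * (M (a, b1) (a, b2) * x b2) from
    Finset.sum_congr rfl fun _ _ => Finset.sum_comm]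
  exact Finset.sum_comm

lemma traceRight_isHermitian {M : Matrix (A × B) (A × B) ℂ} (h : M.IsHermitian) :
    (traceRight M).IsHermitian := by
  ext a a'
  simp only [conjTranspose_apply, traceRight, star_sum]
  exact Finset.sum_congr rfl fun b _ => h.apply _ _

lemma traceLeft_isHermitian {M : Matrix (A × B) (A × B) ℂ} (h : M.IsHermitian) :
    (traceLeft M).IsHermitian := by
  ext b b'
  simp only [conjTranspose_apply, traceLeft, star_sum]
  exact Finset.sum_congr rfl fun a _ => h.apply _ _

lemma traceRight_posSemidef {M : Matrix (A × B) (A × B) ℂ} (h : M.PosSemidef) :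
    (traceRight M).PosSemidef :=
  Matrix.PosSemidef.of_dotProduct_mulVec_nonneg (traceRight_isHermitian h.1) (fun x => by
    rw [dot_traceRight]
    exact Finset.sum_nonneg fun b _ => h.dotProduct_mulVec_nonneg _)

lemma traceLeft_posSemidef {M : Matrix (A × B) (A × B) ℂ} (h : M.PosSemidef) :
    (traceLeft M).PosSemidef :=
  Matrix.PosSemidef.of_dotProduct_mulVec_nonneg (traceLeft_isHermitian h.1) (fun x => by
    rw [dot_traceLeft]
    exact Finset.sum_nonneg fun a _ => h.dotProduct_mulVec_nonneg _)

lemma trace_traceRight (M : Matrix (A × B) (A × B) ℂ) : (traceRight M).trace = M.trace := by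
  simp [Matrix.trace, Matrix.diag, traceRight, Fintype.sum_prod_type]

lemma trace_traceLeft (M : Matrix (A × B) (A × B) ℂ) : (traceLeft M).trace = M.trace := by
  have h2 : M.trace = ∑ a : A, ∑ b : B, M (a, b) (a, b) := by
    simp [Matrix.trace, Matrix.diag, Fintype.sum_prod_type]
  rw [h2]
  simp only [Matrix.trace, Matrix.diag, traceLeft]
  exact Finset.sum_comm

lemma kron_star (M : Matrix A A ℂ) (N : Matrix B B ℂ) :
    star (M ⊗ₖ N) = star M ⊗ₖ star N := by
  ext m m'
  simp [Matrix.star_eq_conjTranspose, conjTranspose_apply, star_mul']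

lemma trace_diag_mul {ι : Type*} [Fintype ι] [DecidableEq ι] (d : ι → ℂ) (N : Matrix ι ι ℂ) :
    (Matrix.diagonal d * N).trace = ∑ i, d i * N i i := by
  simp [Matrix.trace, Matrix.diag, Matrix.diagonal_mul]

lemma trace_kron_one_mul (K : Matrix A A ℂ) (M : Matrix (A × B) (A × B) ℂ) :
    ((K ⊗ₖ (1 : Matrix B B ℂ)) * M).trace = (K * traceRight M).trace := by
  simp only [Matrix.trace, Matrix.diag, Matrix.mul_apply, traceRight, kroneckerMap_apply,
    Matrix.one_apply, Fintype.sum_prod_type, mul_ite, mul_zero, mul_one, ite_mul, zero_mul,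
    Finset.mul_sum, Finset.sum_ite_eq', Finset.sum_ite_eq, Finset.mem_univ, if_true]
  rw [show (∑ a : A, ∑ b : B, ∑ a1 : A, K a a1 * M (a1, b) (a, b))
      = ∑ a : A, ∑ a1 : A, ∑ b : B, K a a1 * M (a1, b) (a, b) from
    Finset.sum_congr rfl fun _ _ => Finset.sum_comm]

lemma trace_one_kron_mul (K' : Matrix B B ℂ) (M : Matrix (A × B) (A × B) ℂ) :
    (((1 : Matrix A A ℂ) ⊗ₖ K') * M).trace = (K' * traceLeft M).trace := by
  simp only [Matrix.trace, Matrix.diag, Matrix.mul_apply, traceLeft, kroneckerMap_apply,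
    Matrix.one_apply, Fintype.sum_prod_type, mul_ite, mul_zero, mul_one, ite_mul, zero_mul,
    Finset.mul_sum, Finset.sum_ite_irrel, Finset.sum_const_zero,
    Finset.sum_ite_eq', Finset.sum_ite_eq, Finset.mem_univ, if_true, one_mul]
  rw [show (∑ a : A, ∑ b1 : B, ∑ b2 : B, K' b1 b2 * M (a, b2) (a, b1))
      = ∑ b1 : B, ∑ a : A, ∑ b2 : B, K' b1 b2 * M (a, b2) (a, b1) from Finset.sum_comm]
  exact Finset.sum_congr rfl fun _ _ => Finset.sum_comm

lemma trace_eq_sum_eigs {ι : Type*} [Fintype ι] [DecidableEq ι] {M : Matrix ι ι ℂ}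
    (h : M.IsHermitian) : M.trace = ∑ i, (h.eigenvalues i : ℂ) := by
  conv_lhs => rw [h.spectral_theorem]
  rw [Unitary.conjStarAlgAut_apply, Matrix.trace_mul_cycle, Matrix.mem_unitaryGroup_iff'.mp h.eigenvectorUnitary.2,
    one_mul, Matrix.trace_diagonal]
  simp

lemma trace_conj_cycle {ι : Type*} [Fintype ι] (Pi W M : Matrix ι ι ℂ) :
    (Pi * (star W * M * W)).trace = ((W * Pi * star W) * M).trace := by
  calc (Pi * (star W * M * W)).trace = ((Pi * star W * M) * W).trace := by
        simp only [Matrix.mul_assoc]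
    _ = (W * (Pi * star W * M)).trace := (Matrix.trace_mul_comm _ _).symm
    _ = ((W * Pi * star W) * M).trace := by simp only [Matrix.mul_assoc]

lemma klein_ineq {t x y : ℝ} (ht : 0 ≤ t) (hx : 0 ≤ x) (hy : 0 ≤ y) (h0 : y = 0 → t * x = 0) :
    t * (x - y) ≤ t * (x * Real.log x - x * Real.log y) ∧
      (t * (x - y) = t * (x * Real.log x - x * Real.log y) ↔ t * x = t * y) := by
  rcases eq_or_lt_of_le ht with h | h
  · simp [← h]
  rcases eq_or_lt_of_le hy with hy0 | hy0
  · have hx0 : x = 0 := by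
      rcases mul_eq_zero.mp (h0 hy0.symm) with h' | h'
      · exact absurd h' (ne_of_gt h)
      · exact h'
    simp [hx0, ← hy0]
  rcases eq_or_lt_of_le hx with hx0 | hx0
  · constructor
    · rw [← hx0]
      simp only [zero_mul, sub_zero, mul_zero, zero_sub]
      nlinarith
    · constructor
      · intro heq
        exfalso
        rw [← hx0] at heq
        simp only [zero_mul, sub_zero, mul_zero, zero_sub] at heq
        nlinarith
      · intro heq
        exfalso
        rw [← hx0, mul_zero] at heq
        nlinarith [heq.symm ▸ (mul_pos h hy0)]
  · have hlog := Real.log_le_sub_one_of_pos (div_pos hy0 hx0)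
    have hsplit : Real.log (y / x) = Real.log y - Real.log x := Real.log_div (ne_of_gt hy0) (ne_of_gt hx0)
    have hfield : x * (y / x - 1) = y - x := by field_simp
    have hmain : x - y ≤ x * Real.log x - x * Real.log y := by
      have h1 : x * Real.log (y / x) ≤ x * (y / x - 1) :=
        mul_le_mul_of_nonneg_left hlog hx
      rw [hsplit, hfield, mul_sub] at h1
      linarith
    constructor
    · exact mul_le_mul_of_nonneg_left hmain ht
    · constructor
      · intro heq
        have heq' : x - y = x * Real.log x - x * Real.log y := mul_left_cancel₀ (ne_of_gt h) heq
        by_contra hne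
        have hxy : x ≠ y := fun hh => hne (by rw [hh])
        have hstrict := Real.log_lt_sub_one_of_pos (div_pos hy0 hx0)
          (by
            intro hcon
            exact hxy (by field_simp at hcon; linarith))
        have h1 : x * Real.log (y / x) < x * (y / x - 1) :=
          (mul_lt_mul_iff_right₀ hx0).mpr hstrict
        rw [hsplit, hfield, mul_sub] at h1
        linarith
      · intro heq
        have hxy : x = y := mul_left_cancel₀ (ne_of_gt h) heq
        subst hxy
        ring

end helpers


set_option maxHeartbeats 2000000 in
open Kronecker Matrix in
/-- subadditivity of von Neumann entropy, with equality iff the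
state is a product of its marginals. -/
theorem entropy_subadditivity {A B : Type*}
    [Fintype A] [Fintype B] [DecidableEq A] [DecidableEq B]
    (ρ : Matrix (A × B) (A × B) ℂ)
    (hpos : ρ.PosSemidef) (htr : ρ.trace = 1) :
    vnEntropy ρ ≤ vnEntropy (traceRight ρ) + vnEntropy (traceLeft ρ) ∧
      (vnEntropy ρ = vnEntropy (traceRight ρ) + vnEntropy (traceLeft ρ) ↔
        ρ = traceRight ρ ⊗ₖ traceLeft ρ) := by
  classical
  have hρ : ρ.IsHermitian := hpos.1
  have hpsA : (traceRight ρ).PosSemidef := traceRight_posSemidef hpos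
  have hpsB : (traceLeft ρ).PosSemidef := traceLeft_posSemidef hpos
  have hA' : (traceRight ρ).IsHermitian := hpsA.1
  have hB' : (traceLeft ρ).IsHermitian := hpsB.1
  have hcast : (RCLike.ofReal : ℝ → ℂ) = Complex.ofReal := rfl
  set p : A × B → ℝ := hρ.eigenvalues with hp_def
  set r : A → ℝ := hA'.eigenvalues with hr_def
  set s : B → ℝ := hB'.eigenvalues with hs_def
  set V : Matrix (A × B) (A × B) ℂ := (hρ.eigenvectorUnitary : Matrix (A × B) (A × B) ℂ)
    with hV_def
  set U : Matrix A A ℂ := (hA'.eigenvectorUnitary : Matrix A A ℂ) with hU_def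
  set U' : Matrix B B ℂ := (hB'.eigenvectorUnitary : Matrix B B ℂ) with hU'_def
  set W : Matrix (A × B) (A × B) ℂ := U ⊗ₖ U' with hW_def
  set G : Matrix (A × B) (A × B) ℂ := star V * W with hG_def
  set q : A × B → ℝ := fun m => r m.1 * s m.2 with hq_def
  set P : (A × B) → (A × B) → ℝ := fun k m => Complex.normSq (G k m) with hP_def
  set Dp : Matrix (A × B) (A × B) ℂ := Matrix.diagonal (RCLike.ofReal ∘ p) with hDp_def
  set Dq : Matrix (A × B) (A × B) ℂ := Matrix.diagonal (RCLike.ofReal ∘ q) with hDq_def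
  -- unitarity facts
  have hV1 : V * star V = 1 := Matrix.mem_unitaryGroup_iff.mp hρ.eigenvectorUnitary.2
  have hV2 : star V * V = 1 := Matrix.mem_unitaryGroup_iff'.mp hρ.eigenvectorUnitary.2
  have hU1 : U * star U = 1 := Matrix.mem_unitaryGroup_iff.mp hA'.eigenvectorUnitary.2
  have hU2 : star U * U = 1 := Matrix.mem_unitaryGroup_iff'.mp hA'.eigenvectorUnitary.2
  have hU'1 : U' * star U' = 1 := Matrix.mem_unitaryGroup_iff.mp hB'.eigenvectorUnitary.2
  have hU'2 : star U' * U' = 1 := Matrix.mem_unitaryGroup_iff'.mp hB'.eigenvectorUnitary.2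
  have hWstar : star W = star U ⊗ₖ star U' := kron_star U U'
  have hW1 : W * star W = 1 := by
    rw [hWstar, hW_def, ← Matrix.mul_kronecker_mul, hU1, hU'1, Matrix.one_kronecker_one]
  have hW2 : star W * W = 1 := by
    rw [hWstar, hW_def, ← Matrix.mul_kronecker_mul, hU2, hU'2, Matrix.one_kronecker_one]
  have hGstar : star G = star W * V := by rw [hG_def, StarMul.star_mul, star_star]
  have hG1 : G * star G = 1 := by
    rw [hGstar, hG_def, Matrix.mul_assoc (star V) W _, ← Matrix.mul_assoc W (star W) V, hW1,
      Matrix.one_mul, hV2]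
  have hG2 : star G * G = 1 := by
    rw [hGstar, hG_def, Matrix.mul_assoc (star W) V _, ← Matrix.mul_assoc V (star V) W, hV1,
      Matrix.one_mul, hW2]
  -- spectral decompositions
  have hspecρ : ρ = V * Dp * star V := by
    rw [hV_def, hDp_def, hp_def]; exact hρ.spectral_theorem
  have hspecA : traceRight ρ = U * Matrix.diagonal (RCLike.ofReal ∘ r) * star U := by
    rw [hU_def, hr_def]; exact hA'.spectral_theorem
  have hspecB : traceLeft ρ = U' * Matrix.diagonal (RCLike.ofReal ∘ s) * star U' := by
    rw [hU'_def, hs_def]; exact hB'.spectral_theorem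
  have hdiagA : star U * traceRight ρ * U = Matrix.diagonal (RCLike.ofReal ∘ r) := by
    rw [hU_def, hr_def]; have := hA'.conjStarAlgAut_star_eigenvectorUnitary
    rw [Unitary.conjStarAlgAut_star_apply] at this; exact this
  have hdiagB : star U' * traceLeft ρ * U' = Matrix.diagonal (RCLike.ofReal ∘ s) := by
    rw [hU'_def, hs_def]; have := hB'.conjStarAlgAut_star_eigenvectorUnitary
    rw [Unitary.conjStarAlgAut_star_apply] at this; exact this
  have hDq_kron : Matrix.diagonal (RCLike.ofReal ∘ r) ⊗ₖ Matrix.diagonal (RCLike.ofReal ∘ s)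
      = Dq := by
    have hfun : (RCLike.ofReal ∘ q : A × B → ℂ)
        = fun mn : A × B => (RCLike.ofReal (r mn.1) : ℂ) * RCLike.ofReal (s mn.2) := by
      funext m
      simp only [Function.comp_apply, hq_def, hcast]
      push_cast
      ring
    rw [Matrix.diagonal_kronecker_diagonal, hDq_def, hfun]
    rfl
  have hσ : traceRight ρ ⊗ₖ traceLeft ρ = W * Dq * star W := by
    rw [hspecA, hspecB, Matrix.mul_kronecker_mul, Matrix.mul_kronecker_mul, hDq_kron,
      ← hWstar, ← hW_def]
  -- basic matrix identities
  have hρW : ρ * W = V * (Dp * G) := by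
    rw [hspecρ, hG_def]; simp only [Matrix.mul_assoc]
  have hVG : V * G = W := by rw [hG_def, ← Matrix.mul_assoc, hV1, Matrix.one_mul]
  have hσW : (traceRight ρ ⊗ₖ traceLeft ρ) * W = V * (G * Dq) := by
    rw [hσ]
    calc W * Dq * star W * W = W * Dq * (star W * W) := by rw [Matrix.mul_assoc]
      _ = W * Dq := by rw [hW2, Matrix.mul_one]
      _ = V * (G * Dq) := by rw [← Matrix.mul_assoc, hVG]
  have hDpG : Dp * G = star V * (ρ * W) := by
    rw [hρW, ← Matrix.mul_assoc (star V) V (Dp * G), hV2, Matrix.one_mul]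
  have hGDq : G * Dq = star V * ((traceRight ρ ⊗ₖ traceLeft ρ) * W) := by
    rw [hσW, ← Matrix.mul_assoc (star V) V (G * Dq), hV2, Matrix.one_mul]
  have hpG : ∀ k m, (Dp * G) k m = ((p k : ℝ) : ℂ) * G k m := by
    intro k m; rw [hDp_def, Matrix.diagonal_mul]; rfl
  have hGq : ∀ k m, (G * Dq) k m = G k m * ((q m : ℝ) : ℂ) := by
    intro k m; rw [hDq_def, Matrix.mul_diagonal]; rfl
  -- row and column sums of P
  have hProw : ∀ k, ∑ m, P k m = 1 := by
    intro k
    have h1 : (G * star G) k k = 1 := by rw [hG1]; simp [Matrix.one_apply]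
    rw [Matrix.mul_apply] at h1
    have h2 : ∀ m, G k m * (star G) m k = ((P k m : ℝ) : ℂ) := by
      intro m
      rw [Matrix.star_apply, hP_def]
      exact Complex.mul_conj (G k m)
    rw [Finset.sum_congr rfl fun m _ => h2 m, ← Complex.ofReal_sum] at h1
    exact_mod_cast h1
  have hPcol : ∀ m, ∑ k, P k m = 1 := by
    intro m
    have h1 : (star G * G) m m = 1 := by rw [hG2]; simp [Matrix.one_apply]
    rw [Matrix.mul_apply] at h1
    have h2 : ∀ k, (star G) m k * G k m = ((P k m : ℝ) : ℂ) := by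
      intro k
      rw [Matrix.star_apply, hP_def, mul_comm]
      exact Complex.mul_conj (G k m)
    rw [Finset.sum_congr rfl fun k _ => h2 k, ← Complex.ofReal_sum] at h1
    exact_mod_cast h1
  -- diagonal overlap coefficients
  set c : A × B → ℝ := fun m => ∑ k, p k * P k m with hc_def
  have hWρW : star W * ρ * W = star G * (Dp * G) := by
    calc star W * ρ * W = star W * (ρ * W) := Matrix.mul_assoc _ _ _
      _ = star W * (V * (Dp * G)) := by rw [hρW]
      _ = star W * V * (Dp * G) := (Matrix.mul_assoc _ _ _).symm
      _ = star G * (Dp * G) := by rw [hGstar]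
  have hcC : ∀ m, ((c m : ℝ) : ℂ) = (star W * ρ * W) m m := by
    intro m
    rw [hWρW, Matrix.mul_apply]
    have h2 : ∀ k, (star G) m k * (Dp * G) k m = ((p k * P k m : ℝ) : ℂ) := by
      intro k
      rw [Matrix.star_apply, hpG k m, hP_def]
      push_cast
      rw [← Complex.mul_conj (G k m)]
      simp only [Complex.star_def]
      ring
    rw [Finset.sum_congr rfl fun k _ => h2 k, ← Complex.ofReal_sum]
  -- marginals of c
  have hmargA : ∀ a, ∑ b, c (a, b) = r a := by
    intro a
    have hPi : Matrix.diagonal (fun m : A × B => if m.1 = a then (1 : ℂ) else 0)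
        = Matrix.diagonal (fun a' : A => if a' = a then (1 : ℂ) else 0) ⊗ₖ (1 : Matrix B B ℂ) := by
      rw [← Matrix.diagonal_one, Matrix.diagonal_kronecker_diagonal]
      congr 1
      funext m
      simp
    have hWPi : W * Matrix.diagonal (fun m : A × B => if m.1 = a then (1 : ℂ) else 0) * star W
        = (U * Matrix.diagonal (fun a' : A => if a' = a then (1 : ℂ) else 0) * star U)
            ⊗ₖ (1 : Matrix B B ℂ) := by
      rw [hPi, hWstar, hW_def, ← Matrix.mul_kronecker_mul, ← Matrix.mul_kronecker_mul,
        Matrix.mul_one, hU'1]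
    have key : ∑ b, ((c (a, b) : ℝ) : ℂ) = ((r a : ℝ) : ℂ) := by
      calc ∑ b, ((c (a, b) : ℝ) : ℂ)
          = ∑ b, (star W * ρ * W) (a, b) (a, b) :=
            Finset.sum_congr rfl fun b _ => hcC _
        _ = (Matrix.diagonal (fun m : A × B => if m.1 = a then (1 : ℂ) else 0)
              * (star W * ρ * W)).trace := by
            rw [trace_diag_mul, Fintype.sum_prod_type]
            simp only [ite_mul, one_mul, zero_mul, Finset.sum_ite_irrel, Finset.sum_const_zero,
              Finset.sum_ite_eq', Finset.mem_univ, if_true]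
        _ = ((W * Matrix.diagonal (fun m : A × B => if m.1 = a then (1 : ℂ) else 0) * star W)
              * ρ).trace := trace_conj_cycle _ _ _
        _ = (((U * Matrix.diagonal (fun a' : A => if a' = a then (1 : ℂ) else 0) * star U)
              ⊗ₖ (1 : Matrix B B ℂ)) * ρ).trace := by rw [hWPi]
        _ = ((U * Matrix.diagonal (fun a' : A => if a' = a then (1 : ℂ) else 0) * star U)
              * traceRight ρ).trace := trace_kron_one_mul _ _
        _ = (Matrix.diagonal (fun a' : A => if a' = a then (1 : ℂ) else 0)
              * (star U * traceRight ρ * U)).trace := (trace_conj_cycle _ _ _).symm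
        _ = ((r a : ℝ) : ℂ) := by
            rw [hdiagA, Matrix.diagonal_mul_diagonal, Matrix.trace_diagonal]
            simp [Finset.sum_ite_eq']
    rw [← Complex.ofReal_sum] at key
    exact_mod_cast key
  have hmargB : ∀ b, ∑ a, c (a, b) = s b := by
    intro b
    have hPi : Matrix.diagonal (fun m : A × B => if m.2 = b then (1 : ℂ) else 0)
        = (1 : Matrix A A ℂ) ⊗ₖ Matrix.diagonal (fun b' : B => if b' = b then (1 : ℂ) else 0) := by
      rw [← Matrix.diagonal_one, Matrix.diagonal_kronecker_diagonal]
      congr 1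
      funext m
      simp
    have hWPi : W * Matrix.diagonal (fun m : A × B => if m.2 = b then (1 : ℂ) else 0) * star W
        = (1 : Matrix A A ℂ) ⊗ₖ
            (U' * Matrix.diagonal (fun b' : B => if b' = b then (1 : ℂ) else 0) * star U') := by
      rw [hPi, hWstar, hW_def, ← Matrix.mul_kronecker_mul, ← Matrix.mul_kronecker_mul,
        Matrix.mul_one, hU1]
    have key : ∑ a, ((c (a, b) : ℝ) : ℂ) = ((s b : ℝ) : ℂ) := by
      calc ∑ a, ((c (a, b) : ℝ) : ℂ)
          = ∑ a, (star W * ρ * W) (a, b) (a, b) :=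
            Finset.sum_congr rfl fun a _ => hcC _
        _ = (Matrix.diagonal (fun m : A × B => if m.2 = b then (1 : ℂ) else 0)
              * (star W * ρ * W)).trace := by
            rw [trace_diag_mul, Fintype.sum_prod_type]
            simp only [ite_mul, one_mul, zero_mul, Finset.sum_ite_irrel, Finset.sum_const_zero,
              Finset.sum_ite_eq', Finset.mem_univ, if_true]
        _ = ((W * Matrix.diagonal (fun m : A × B => if m.2 = b then (1 : ℂ) else 0) * star W)
              * ρ).trace := trace_conj_cycle _ _ _
        _ = (((1 : Matrix A A ℂ) ⊗ₖ
              (U' * Matrix.diagonal (fun b' : B => if b' = b then (1 : ℂ) else 0) * star U'))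
              * ρ).trace := by rw [hWPi]
        _ = ((U' * Matrix.diagonal (fun b' : B => if b' = b then (1 : ℂ) else 0) * star U')
              * traceLeft ρ).trace := trace_one_kron_mul _ _
        _ = (Matrix.diagonal (fun b' : B => if b' = b then (1 : ℂ) else 0)
              * (star U' * traceLeft ρ * U')).trace := (trace_conj_cycle _ _ _).symm
        _ = ((s b : ℝ) : ℂ) := by
            rw [hdiagB, Matrix.diagonal_mul_diagonal, Matrix.trace_diagonal]
            simp [Finset.sum_ite_eq']
    rw [← Complex.ofReal_sum] at key
    exact_mod_cast key
  -- support condition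
  have hsupp : ∀ k m, q m = 0 → p k * P k m = 0 := by
    intro k m hqm
    have hcol : ∀ j, (ρ * W) j m = 0 := by
      obtain ⟨a, b⟩ := m
      have hqm' : r a * s b = 0 := hqm
      rcases mul_eq_zero.mp hqm' with h0 | h0
      · -- r a = 0
        set u : A → ℂ := fun i => U i a with hu_def
        have hu : traceRight ρ *ᵥ u = 0 := by
          funext i
          have h3 : (traceRight ρ *ᵥ u) i = (traceRight ρ * U) i a := by
            simp [Matrix.mulVec, Matrix.mul_apply, hu_def, dotProduct]
          have hAU : traceRight ρ * U = U * Matrix.diagonal (RCLike.ofReal ∘ r) := by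
            rw [hspecA, Matrix.mul_assoc, hU2, Matrix.mul_one]
          rw [h3, hAU, Matrix.mul_diagonal]
          simp [hcast, h0]
        have hdot : star u ⬝ᵥ traceRight ρ *ᵥ u = 0 := by rw [hu]; simp
        rw [dot_traceRight] at hdot
        have hvec : ∀ b', ρ *ᵥ embB u b' = 0 := by
          intro b'
          refine (hpos.dotProduct_mulVec_zero_iff _).mp ?_
          exact (Finset.sum_eq_zero_iff_of_nonneg (fun _ _ => hpos.dotProduct_mulVec_nonneg _)).mp hdot b'
            (Finset.mem_univ _)
        intro j
        have expand : (ρ * W) j (a, b) = ∑ b1, U' b1 b * (ρ *ᵥ embB u b1) j := by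
          simp only [Matrix.mul_apply, Matrix.mulVec, dotProduct, hW_def,
            Matrix.kroneckerMap_apply, embB, mul_ite, mul_zero, Fintype.sum_prod_type, hu_def,
            Finset.mul_sum, Finset.sum_ite_irrel, Finset.sum_const_zero, Finset.sum_ite_eq',
            Finset.mem_univ, if_true]
          rw [Finset.sum_comm]
          refine Finset.sum_congr rfl fun a1 _ => Finset.sum_congr rfl fun b1 _ => by ring
        rw [expand]
        simp [hvec]
      · -- s b = 0
        set u : B → ℂ := fun i => U' i b with hu_def
        have hu : traceLeft ρ *ᵥ u = 0 := by
          funext i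
          have h3 : (traceLeft ρ *ᵥ u) i = (traceLeft ρ * U') i b := by
            simp [Matrix.mulVec, Matrix.mul_apply, hu_def, dotProduct]
          have hAU : traceLeft ρ * U' = U' * Matrix.diagonal (RCLike.ofReal ∘ s) := by
            rw [hspecB, Matrix.mul_assoc, hU'2, Matrix.mul_one]
          rw [h3, hAU, Matrix.mul_diagonal]
          simp [hcast, h0]
        have hdot : star u ⬝ᵥ traceLeft ρ *ᵥ u = 0 := by rw [hu]; simp
        rw [dot_traceLeft] at hdot
        have hvec : ∀ a', ρ *ᵥ embA u a' = 0 := by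
          intro a'
          refine (hpos.dotProduct_mulVec_zero_iff _).mp ?_
          exact (Finset.sum_eq_zero_iff_of_nonneg (fun _ _ => hpos.dotProduct_mulVec_nonneg _)).mp hdot a'
            (Finset.mem_univ _)
        intro j
        have expand : (ρ * W) j (a, b) = ∑ a1, U a1 a * (ρ *ᵥ embA u a1) j := by
          simp only [Matrix.mul_apply, Matrix.mulVec, dotProduct, hW_def,
            Matrix.kroneckerMap_apply, embA, mul_ite, mul_zero, Fintype.sum_prod_type, hu_def,
            Finset.mul_sum, Finset.sum_ite_irrel, Finset.sum_const_zero, Finset.sum_ite_eq',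
            Finset.mem_univ, if_true]
          refine Finset.sum_congr rfl fun a1 _ => Finset.sum_congr rfl fun b1 _ => by ring
        rw [expand]
        simp [hvec]
    have hzero : ((p k : ℝ) : ℂ) * G k m = 0 := by
      rw [← hpG, hDpG, Matrix.mul_apply]
      exact Finset.sum_eq_zero fun j _ => by rw [hcol j, mul_zero]
    rcases mul_eq_zero.mp hzero with h' | h'
    · have hp' : p k = 0 := by exact_mod_cast h'
      rw [hp', zero_mul]
    · have hP' : P k m = 0 := by rw [hP_def]; simp only; rw [h', Complex.normSq_zero]
      rw [hP', mul_zero]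
  have hsuppc : ∀ m, q m = 0 → c m = 0 := fun m hm =>
    Finset.sum_eq_zero fun k _ => hsupp k m hm
  -- positivity and normalization
  have hp0 : ∀ k, 0 ≤ p k := fun k => hpos.eigenvalues_nonneg k
  have hr0 : ∀ a, 0 ≤ r a := fun a => hpsA.eigenvalues_nonneg a
  have hs0 : ∀ b, 0 ≤ s b := fun b => hpsB.eigenvalues_nonneg b
  have hq0 : ∀ m, 0 ≤ q m := fun m => mul_nonneg (hr0 _) (hs0 _)
  have hP0 : ∀ k m, 0 ≤ P k m := fun k m => Complex.normSq_nonneg _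
  have hsum_p : ∑ k, p k = 1 := by
    have h1 := trace_eq_sum_eigs hρ
    rw [htr, ← Complex.ofReal_sum] at h1
    exact_mod_cast h1.symm
  have hsum_r : ∑ a, r a = 1 := by
    have h1 := trace_eq_sum_eigs hA'
    rw [trace_traceRight, htr, ← Complex.ofReal_sum] at h1
    exact_mod_cast h1.symm
  have hsum_s : ∑ b, s b = 1 := by
    have h1 := trace_eq_sum_eigs hB'
    rw [trace_traceLeft, htr, ← Complex.ofReal_sum] at h1
    exact_mod_cast h1.symm
  have hsum_q : ∑ m, q m = 1 := by
    calc ∑ m : A × B, q m = ∑ a, ∑ b, r a * s b := by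
          rw [Fintype.sum_prod_type]
      _ = (∑ a, r a) * (∑ b, s b) := (Finset.sum_mul_sum _ _ _ _).symm
      _ = 1 := by rw [hsum_r, hsum_s, mul_one]
  -- entropy formulas
  have hvnρ : vnEntropy ρ = -∑ k, p k * Real.log (p k) := by
    unfold vnEntropy
    rw [dif_pos hρ]
  have hvnA : vnEntropy (traceRight ρ) = -∑ a, r a * Real.log (r a) := by
    unfold vnEntropy
    rw [dif_pos hA']
  have hvnB : vnEntropy (traceLeft ρ) = -∑ b, s b * Real.log (s b) := by
    unfold vnEntropy
    rw [dif_pos hB']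
  -- klein's inequality pointwise
  have hklein : ∀ k m,
      P k m * (p k - q m) ≤ P k m * (p k * Real.log (p k) - p k * Real.log (q m)) ∧
        (P k m * (p k - q m) = P k m * (p k * Real.log (p k) - p k * Real.log (q m)) ↔
          P k m * p k = P k m * q m) := by
    intro k m
    exact klein_ineq (hP0 k m) (hp0 k) (hq0 m)
      (fun hy => by rw [mul_comm]; exact hsupp k m hy)
  -- sum of the lower bound vanishes
  have hsumL : ∑ k, ∑ m, P k m * (p k - q m) = 0 := by
    have h1 : ∑ k, ∑ m, P k m * p k = 1 := by
      calc ∑ k, ∑ m, P k m * p k = ∑ k, (∑ m, P k m) * p k := by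
            exact Finset.sum_congr rfl fun k _ => (Finset.sum_mul _ _ _).symm
        _ = ∑ k, p k := Finset.sum_congr rfl fun k _ => by rw [hProw k, one_mul]
        _ = 1 := hsum_p
    have h2 : ∑ k, ∑ m, P k m * q m = 1 := by
      rw [Finset.sum_comm]
      calc ∑ m, ∑ k, P k m * q m = ∑ m, (∑ k, P k m) * q m := by
            exact Finset.sum_congr rfl fun m _ => (Finset.sum_mul _ _ _).symm
        _ = ∑ m, q m := Finset.sum_congr rfl fun m _ => by rw [hPcol m, one_mul]
        _ = 1 := hsum_q
    calc ∑ k, ∑ m, P k m * (p k - q m)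
        = ∑ k, ∑ m, (P k m * p k - P k m * q m) := by
          exact Finset.sum_congr rfl fun k _ => Finset.sum_congr rfl fun m _ => by ring
      _ = (∑ k, ∑ m, P k m * p k) - ∑ k, ∑ m, P k m * q m := by
          simp [Finset.sum_sub_distrib]
      _ = 0 := by rw [h1, h2, sub_self]
  -- the cross term
  have hcross : ∑ m, c m * Real.log (q m)
      = (∑ a, r a * Real.log (r a)) + (∑ b, s b * Real.log (s b)) := by
    have hsplit : ∀ m : A × B,
        c m * Real.log (q m) = c m * Real.log (r m.1) + c m * Real.log (s m.2) := by
      intro m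
      by_cases hm : q m = 0
      · rw [hsuppc m hm]
        ring
      · have hq_eq : q m = r m.1 * s m.2 := rfl
        have h1 : r m.1 ≠ 0 := fun h => hm (by rw [hq_eq, h, zero_mul])
        have h2 : s m.2 ≠ 0 := fun h => hm (by rw [hq_eq, h, mul_zero])
        rw [hq_eq, Real.log_mul h1 h2]
        ring
    rw [Finset.sum_congr rfl fun m _ => hsplit m, Finset.sum_add_distrib]
    congr 1
    · rw [Fintype.sum_prod_type]
      refine Finset.sum_congr rfl fun a _ => ?_
      show ∑ b, c (a, b) * Real.log (r a) = r a * Real.log (r a)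
      rw [← Finset.sum_mul, hmargA a]
    · rw [Fintype.sum_prod_type, Finset.sum_comm]
      refine Finset.sum_congr rfl fun b _ => ?_
      show ∑ a, c (a, b) * Real.log (s b) = s b * Real.log (s b)
      rw [← Finset.sum_mul, hmargB b]
  -- the total upper-bound sum equals the entropy difference
  have hsumR : ∑ k, ∑ m, P k m * (p k * Real.log (p k) - p k * Real.log (q m))
      = vnEntropy (traceRight ρ) + vnEntropy (traceLeft ρ) - vnEntropy ρ := by
    have e1 : ∑ k, ∑ m, P k m * (p k * Real.log (p k)) = ∑ k, p k * Real.log (p k) := by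
      refine Finset.sum_congr rfl fun k _ => ?_
      rw [← Finset.sum_mul, hProw k, one_mul]
    have e2 : ∑ k, ∑ m, P k m * (p k * Real.log (q m)) = ∑ m, c m * Real.log (q m) := by
      rw [Finset.sum_comm]
      refine Finset.sum_congr rfl fun m _ => ?_
      calc ∑ k, P k m * (p k * Real.log (q m)) = (∑ k, p k * P k m) * Real.log (q m) := by
            rw [Finset.sum_mul]
            exact Finset.sum_congr rfl fun k _ => by ring
        _ = c m * Real.log (q m) := rfl
    calc ∑ k, ∑ m, P k m * (p k * Real.log (p k) - p k * Real.log (q m))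
        = ∑ k, ∑ m, (P k m * (p k * Real.log (p k)) - P k m * (p k * Real.log (q m))) := by
          exact Finset.sum_congr rfl fun k _ => Finset.sum_congr rfl fun m _ => by ring
      _ = (∑ k, ∑ m, P k m * (p k * Real.log (p k)))
            - ∑ k, ∑ m, P k m * (p k * Real.log (q m)) := by
          simp [Finset.sum_sub_distrib]
      _ = (∑ k, p k * Real.log (p k)) - ∑ m, c m * Real.log (q m) := by rw [e1, e2]
      _ = vnEntropy (traceRight ρ) + vnEntropy (traceLeft ρ) - vnEntropy ρ := by
          rw [hcross, hvnρ, hvnA, hvnB]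
          ring
  -- part 1 : subadditivity
  have hmain_le : 0 ≤ vnEntropy (traceRight ρ) + vnEntropy (traceLeft ρ) - vnEntropy ρ := by
    rw [← hsumR, ← hsumL]
    exact Finset.sum_le_sum fun k _ => Finset.sum_le_sum fun m _ => (hklein k m).1
  refine ⟨by linarith, ?_⟩
  -- part 2 : equality iff product state
  have hprod_eq : (∀ k m, P k m * p k = P k m * q m) ↔
      ρ = traceRight ρ ⊗ₖ traceLeft ρ := by
    constructor
    · intro hall
      have hPG : ∀ k m, ((p k : ℝ) : ℂ) * G k m = G k m * ((q m : ℝ) : ℂ) := by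
        intro k m
        by_cases hG : G k m = 0
        · rw [hG, mul_zero, zero_mul]
        · have hPne : P k m ≠ 0 := fun hcon => hG (Complex.normSq_eq_zero.mp hcon)
          have hpq : p k = q m := mul_left_cancel₀ hPne (hall k m)
          rw [hpq, mul_comm]
      have hDpGq : Dp * G = G * Dq := by
        ext k m
        rw [hpG, hGq]
        exact hPG k m
      have hρσ : ρ * W = (traceRight ρ ⊗ₖ traceLeft ρ) * W := by
        rw [hρW, hσW, hDpGq]
      calc ρ = ρ * (W * star W) := by rw [hW1, Matrix.mul_one]
        _ = ρ * W * star W := (Matrix.mul_assoc _ _ _).symm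
        _ = (traceRight ρ ⊗ₖ traceLeft ρ) * W * star W := by rw [hρσ]
        _ = (traceRight ρ ⊗ₖ traceLeft ρ) * (W * star W) := Matrix.mul_assoc _ _ _
        _ = traceRight ρ ⊗ₖ traceLeft ρ := by rw [hW1, Matrix.mul_one]
    · intro heq k m
      have hDpGq : Dp * G = G * Dq := by rw [hDpG, hGDq, ← heq]
      have h' : ((p k : ℝ) : ℂ) * G k m = G k m * ((q m : ℝ) : ℂ) := by
        rw [← hpG, ← hGq, hDpGq]
      by_cases hG : G k m = 0
      · have hP' : P k m = 0 := by rw [hP_def]; simp only; rw [hG, Complex.normSq_zero]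
        rw [hP', zero_mul, zero_mul]
      · rw [mul_comm (G k m)] at h'
        have hpq : p k = q m := by
          have := mul_right_cancel₀ hG h'
          exact_mod_cast this
        rw [hpq]
  constructor
  · intro heq
    have hR0 : ∑ k, ∑ m, P k m * (p k * Real.log (p k) - p k * Real.log (q m)) = 0 := by
      rw [hsumR]; linarith
    have hLl : (∑ z : (A × B) × (A × B), P z.1 z.2 * (p z.1 - q z.2))
        = ∑ k, ∑ m, P k m * (p k - q m) := Fintype.sum_prod_type _
    have hRr : (∑ z : (A × B) × (A × B),
          P z.1 z.2 * (p z.1 * Real.log (p z.1) - p z.1 * Real.log (q z.2)))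
        = ∑ k, ∑ m, P k m * (p k * Real.log (p k) - p k * Real.log (q m)) :=
      Fintype.sum_prod_type _
    have hLR : (∑ z : (A × B) × (A × B), P z.1 z.2 * (p z.1 - q z.2))
        = ∑ z : (A × B) × (A × B),
            P z.1 z.2 * (p z.1 * Real.log (p z.1) - p z.1 * Real.log (q z.2)) := by
      rw [hLl, hRr, hsumL, hR0]
    have hall' := (Finset.sum_eq_sum_iff_of_le
      (fun z (_ : z ∈ Finset.univ) => (hklein z.1 z.2).1)).mp hLR
    refine hprod_eq.mp fun k m => (hklein k m).2.mp ?_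
    exact hall' (k, m) (Finset.mem_univ _)
  · intro heq
    have hall : ∀ k m, P k m * (p k - q m)
        = P k m * (p k * Real.log (p k) - p k * Real.log (q m)) :=
      fun k m => (hklein k m).2.mpr (hprod_eq.mpr heq k m)
    have hR0 : ∑ k, ∑ m, P k m * (p k * Real.log (p k) - p k * Real.log (q m)) = 0 := by
      rw [← hsumL]
      exact (Finset.sum_congr rfl fun k _ => Finset.sum_congr rfl fun m _ => hall k m).symm
    rw [hsumR] at hR0
    linarith
end
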